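/- Proposition 2: Let n be a positive integer and λ₂, t₂ > 0 real numbers. Define h : (0,1) → ℝ by h(α) = (1/(α·n))·(t₂ − (1/λ₂)·log(1 − α)). Then there is a unique α* ∈ (0,1) satisfying α*/(1 − α*) + log(1 − α*) = λ₂·t₂, and h attains its minimum over (0,1) at α*; moreover h(α*) < h(α) for every α ∈ (0,1) with α ≠ α*. -/

import Mathlib

open Real


noncomputable def gfun (x : ℝ) : ℝ := x / (1 - x) + Real.log (1 - x)

lemma gfun_hasDeriv {x : ℝ} (hx0 : (0:ℝ) < x) (hx1 : x < 1) :
    HasDerivAt gfun (x / (1 - x)^2) x := by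
  have h1x : (1 : ℝ) - x ≠ 0 := by linarith
  have hA : HasDerivAt (fun x : ℝ => x / (1 - x))
      ((1 * (1 - x) - x * (0 - 1)) / (1 - x)^2) x :=
    (hasDerivAt_id x).div ((hasDerivAt_const x 1).sub (hasDerivAt_id x)) h1x
  have hB : HasDerivAt (fun x : ℝ => Real.log (1 - x)) ((0 - 1) / (1 - x)) x :=
    ((hasDerivAt_const x 1).sub (hasDerivAt_id x)).log h1x
  have := hA.add hB
  refine this.congr_deriv ?_
  field_simp
  ring

lemma gfun_contOn : ContinuousOn gfun (Set.Ico (0:ℝ) 1) := by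
  have h : ∀ x ∈ Set.Ico (0:ℝ) 1, (1:ℝ) - x ≠ 0 := fun x hx => by
    have := hx.2; linarith
  apply ContinuousOn.add
  · exact continuousOn_id.div ((continuousOn_const).sub continuousOn_id) h
  · exact Real.continuousOn_log.comp ((continuousOn_const).sub continuousOn_id)
      (fun x hx => h x hx)

lemma gfun_strictMono : StrictMonoOn gfun (Set.Ico (0:ℝ) 1) := by
  apply strictMonoOn_of_deriv_pos (convex_Ico 0 1) gfun_contOn
  intro x hx
  rw [interior_Ico] at hx
  rw [(gfun_hasDeriv hx.1 hx.2).deriv]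
  have hx0 : (0:ℝ) < x := hx.1
  have h1 : (0:ℝ) < 1 - x := by linarith [hx.2]
  positivity

lemma Ffun_hasDeriv (n lam₂ t₂ : ℝ) (hn : n ≠ 0) (hlam : lam₂ ≠ 0)
    {x : ℝ} (hx0 : 0 < x) (hx1 : x < 1) :
    HasDerivAt (fun x => (1 / (x * n)) * (t₂ - (1 / lam₂) * Real.log (1 - x)))
      ((gfun x - lam₂ * t₂) / (lam₂ * n * x^2)) x := by
  have h1x : (1:ℝ) - x ≠ 0 := by linarith
  have hxn : x * n ≠ 0 := mul_ne_zero (ne_of_gt hx0) hn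
  have hB : HasDerivAt (fun x : ℝ => Real.log (1 - x)) ((0-1)/(1-x)) x :=
    ((hasDerivAt_const x 1).sub (hasDerivAt_id x)).log h1x
  have hA : HasDerivAt (fun x : ℝ => t₂ - (1/lam₂) * Real.log (1-x))
      (0 - (1/lam₂) * ((0-1)/(1-x))) x :=
    (hasDerivAt_const x t₂).sub (hB.const_mul (1/lam₂))
  have hinv : HasDerivAt (fun x : ℝ => 1/(x*n)) (-(1*n)/((x*n)^2)) x := by
    have h := ((hasDerivAt_id x).mul_const n).inv hxn
    simpa only [one_div, id, Pi.inv_def, one_mul] using h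
  have hmul := hinv.mul hA
  refine hmul.congr_deriv ?_
  simp only [gfun]
  field_simp
  ring

lemma gfun_surj {c : ℝ} (hc : 0 < c) : ∃ α ∈ Set.Ioo (0:ℝ) 1, gfun α = c := by
  set s := Real.sqrt c with hs
  have hs0 : 0 < s := Real.sqrt_pos.2 hc
  set u : ℝ := ((1+s)^2)⁻¹ with hu
  have h1s : (0:ℝ) < 1 + s := by linarith
  have hu0 : 0 < u := by positivity
  have hu1 : u < 1 := by
    rw [hu]
    have : (1:ℝ) < (1+s)^2 := by nlinarith
    exact inv_lt_one_of_one_lt₀ this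
  set x₀ : ℝ := 1 - u with hx₀def
  have hx₀0 : 0 < x₀ := by simp [hx₀def]; linarith
  have hx₀1 : x₀ < 1 := by simp [hx₀def]; linarith
  have hgx₀ : c ≤ gfun x₀ := by
    have hlog : Real.log u = -(2 * Real.log (1+s)) := by
      rw [hu, Real.log_inv, Real.log_pow]
      push_cast; ring
    have hlb : Real.log (1+s) ≤ s := by
      have := Real.log_le_sub_one_of_pos h1s
      linarith
    have hgeq : gfun x₀ = 1/u - 1 + Real.log u := by
      simp only [gfun, hx₀def, show (1:ℝ) - (1-u) = u by ring]
      field_simp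
    rw [hgeq, hlog]
    have h1u : 1/u = (1+s)^2 := by rw [hu, one_div, inv_inv]
    rw [h1u]
    have hsc : s^2 = c := Real.sq_sqrt hc.le
    nlinarith
  have h0 : gfun 0 = 0 := by simp [gfun]
  have hcont : ContinuousOn gfun (Set.Icc 0 x₀) :=
    gfun_contOn.mono (Set.Icc_subset_Ico_right hx₀1)
  have hsub := intermediate_value_Icc hx₀0.le hcont
  have hcmem : c ∈ Set.Icc (gfun 0) (gfun x₀) := by rw [h0]; exact ⟨hc.le, hgx₀⟩
  obtain ⟨α, hαmem, hαeq⟩ := hsub hcmem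
  refine ⟨α, ⟨?_, lt_of_le_of_lt hαmem.2 hx₀1⟩, hαeq⟩
  rcases lt_or_eq_of_le hαmem.1 with h | h
  · exact h
  · exfalso; rw [← h, h0] at hαeq; linarith

/-- Proposition 2: for `h(α) = (1/(α·n))·(t₂ − (1/λ₂)·log(1 − α))` on `(0,1)`,
there is a unique `α* ∈ (0,1)` with `α*/(1 − α*) + log(1 − α*) = λ₂·t₂`, and `h`
attains its strict minimum over `(0,1)` at `α*`. -/
theorem optimal_communication_ratio
    (n : ℕ) (hn : 0 < n) (lam₂ t₂ : ℝ) (hlam₂ : 0 < lam₂) (ht₂ : 0 < t₂) :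
    ∃ α : ℝ, α ∈ Set.Ioo (0 : ℝ) 1 ∧
      α / (1 - α) + Real.log (1 - α) = lam₂ * t₂ ∧
      (∀ β ∈ Set.Ioo (0 : ℝ) 1,
        β / (1 - β) + Real.log (1 - β) = lam₂ * t₂ → β = α) ∧
      (∀ β ∈ Set.Ioo (0 : ℝ) 1, β ≠ α →
        (1 / (α * n)) * (t₂ - (1 / lam₂) * Real.log (1 - α)) <
          (1 / (β * n)) * (t₂ - (1 / lam₂) * Real.log (1 - β))) := by
  have hc : 0 < lam₂ * t₂ := mul_pos hlam₂ ht₂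
  obtain ⟨α, hα, hαeq⟩ := gfun_surj hc
  have hnR : (n:ℝ) ≠ 0 := Nat.cast_ne_zero.2 hn.ne'
  have hlamne : lam₂ ≠ 0 := hlam₂.ne'
  set F : ℝ → ℝ := fun x => (1 / (x * n)) * (t₂ - (1 / lam₂) * Real.log (1 - x)) with hF
  have hderiv : ∀ x ∈ Set.Ioo (0:ℝ) 1,
      HasDerivAt F ((gfun x - lam₂ * t₂) / (lam₂ * n * x^2)) x :=
    fun x hx => Ffun_hasDeriv n lam₂ t₂ hnR hlamne hx.1 hx.2
  refine ⟨α, hα, hαeq, ?_, ?_⟩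
  · intro β hβ hβeq
    exact gfun_strictMono.injOn (Set.mem_Ico.2 ⟨hβ.1.le, hβ.2⟩)
      (Set.mem_Ico.2 ⟨hα.1.le, hα.2⟩) (hβeq.trans hαeq.symm)
  · intro β hβ hβne
    have hmemIoo : ∀ {x : ℝ}, x ∈ Set.Ioo (0:ℝ) 1 → x ∈ Set.Ico (0:ℝ) 1 :=
      fun hx => ⟨hx.1.le, hx.2⟩
    rcases lt_or_gt_of_ne hβne with hlt | hgt
    · -- β < α : F strictly decreasing on Icc β α
      have hsub : Set.Icc β α ⊆ Set.Ioo (0:ℝ) 1 :=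
        fun x hx => ⟨lt_of_lt_of_le hβ.1 hx.1, lt_of_le_of_lt hx.2 hα.2⟩
      have hanti : StrictAntiOn F (Set.Icc β α) := by
        apply strictAntiOn_of_deriv_neg (convex_Icc β α)
        · exact fun x hx => ((hderiv x (hsub hx)).continuousAt).continuousWithinAt
        · intro x hx
          rw [interior_Icc] at hx
          have hxI : x ∈ Set.Ioo (0:ℝ) 1 := hsub ⟨hx.1.le, hx.2.le⟩
          rw [(hderiv x hxI).deriv]
          have hglt : gfun x < lam₂ * t₂ := by
            rw [← hαeq]
            exact gfun_strictMono (hmemIoo hxI) (hmemIoo hα) hx.2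
          apply div_neg_of_neg_of_pos (by linarith)
          have hx0 : (0:ℝ) < x := hxI.1
          have hn0 : (0:ℝ) < (n:ℝ) := Nat.cast_pos.2 hn
          positivity
      exact hanti (Set.left_mem_Icc.2 hlt.le) (Set.right_mem_Icc.2 hlt.le) hlt
    · -- α < β : F strictly increasing on Icc α β
      have hsub : Set.Icc α β ⊆ Set.Ioo (0:ℝ) 1 :=
        fun x hx => ⟨lt_of_lt_of_le hα.1 hx.1, lt_of_le_of_lt hx.2 hβ.2⟩
      have hmono : StrictMonoOn F (Set.Icc α β) := by
        apply strictMonoOn_of_deriv_pos (convex_Icc α β)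
        · exact fun x hx => ((hderiv x (hsub hx)).continuousAt).continuousWithinAt
        · intro x hx
          rw [interior_Icc] at hx
          have hxI : x ∈ Set.Ioo (0:ℝ) 1 := hsub ⟨hx.1.le, hx.2.le⟩
          rw [(hderiv x hxI).deriv]
          have hggt : lam₂ * t₂ < gfun x := by
            rw [← hαeq]
            exact gfun_strictMono (hmemIoo hα) (hmemIoo hxI) hx.1
          apply div_pos (by linarith)
          have hx0 : (0:ℝ) < x := hxI.1
          have hn0 : (0:ℝ) < (n:ℝ) := Nat.cast_pos.2 hn
          positivity
      exact hmono (Set.left_mem_Icc.2 hgt.le) (Set.right_mem_Icc.2 hgt.le) hgt
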